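/- arXiv:2009.13378 — 2 statements merged into one kernel-verified Lean document; each statement's English description precedes it below -/
import Mathlib

section
/- Let Φ be continuous, positive, T-periodic with mean Φ̄, and suppose σ̃ ≥ Φ̄. Then every positive solution of R'(t) = μ R(t)(Φ(t) P₀(R(t)) − σ̃/3) with μ > 0 tends to 0 as t → ∞. Conversely, if every positive solution tends to 0, then σ̃ ≥ Φ̄. -/
open Set Real

noncomputable def P0 (x : ℝ) : ℝ := (x * (Real.cosh x / Real.sinh x) - 1) / x ^ 2

/-- helper: monotone comparison from derivatives on an interval -/
lemma mono_Icc {f f' : ℝ → ℝ} {a b : ℝ}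
    (hc : ContinuousOn f (Set.Icc a b))
    (hd : ∀ t ∈ Set.Ioo a b, HasDerivAt f (f' t) t)
    (h0 : ∀ t ∈ Set.Ioo a b, 0 ≤ f' t) {x y : ℝ}
    (hx : x ∈ Set.Icc a b) (hy : y ∈ Set.Icc a b) (hxy : x ≤ y) : f x ≤ f y := by
  refine monotoneOn_of_deriv_nonneg (convex_Icc a b) hc ?_ ?_ hx hy hxy
  · intro t ht; rw [interior_Icc] at ht
    exact ((hd t ht).differentiableAt).differentiableWithinAt
  · intro t ht; rw [interior_Icc] at ht
    rw [(hd t ht).deriv]; exact h0 t ht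

lemma strict_mono_Icc {f f' : ℝ → ℝ} {a b : ℝ}
    (hc : ContinuousOn f (Set.Icc a b))
    (hd : ∀ t ∈ Set.Ioo a b, HasDerivAt f (f' t) t)
    (h0 : ∀ t ∈ Set.Ioo a b, 0 < f' t) {x y : ℝ}
    (hx : x ∈ Set.Icc a b) (hy : y ∈ Set.Icc a b) (hxy : x < y) : f x < f y := by
  refine strictMonoOn_of_deriv_pos (convex_Icc a b) hc ?_ hx hy hxy
  · intro t ht; rw [interior_Icc] at ht
    rw [(hd t ht).deriv]; exact h0 t ht

lemma anti_Icc {f f' : ℝ → ℝ} {a b : ℝ}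
    (hc : ContinuousOn f (Set.Icc a b))
    (hd : ∀ t ∈ Set.Ioo a b, HasDerivAt f (f' t) t)
    (h0 : ∀ t ∈ Set.Ioo a b, f' t ≤ 0) {x y : ℝ}
    (hx : x ∈ Set.Icc a b) (hy : y ∈ Set.Icc a b) (hxy : x ≤ y) : f y ≤ f x := by
  refine antitoneOn_of_deriv_nonpos (convex_Icc a b) hc ?_ ?_ hx hy hxy
  · intro t ht; rw [interior_Icc] at ht
    exact ((hd t ht).differentiableAt).differentiableWithinAt
  · intro t ht; rw [interior_Icc] at ht
    rw [(hd t ht).deriv]; exact h0 t ht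

lemma anti_Ici {f f' : ℝ → ℝ} {a : ℝ}
    (hd : ∀ t ∈ Set.Ici a, HasDerivAt f (f' t) t)
    (h0 : ∀ t ∈ Set.Ioi a, f' t ≤ 0) {x y : ℝ}
    (hx : x ∈ Set.Ici a) (hy : y ∈ Set.Ici a) (hxy : x ≤ y) : f y ≤ f x := by
  refine antitoneOn_of_deriv_nonpos (convex_Ici a) ?_ ?_ ?_ hx hy hxy
  · exact fun t ht => (hd t ht).continuousAt.continuousWithinAt
  · intro t ht; rw [interior_Ici] at ht
    exact ((hd t (Set.Ioi_subset_Ici_self ht)).differentiableAt).differentiableWithinAt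
  · intro t ht; rw [interior_Ici] at ht
    rw [(hd t (Set.Ioi_subset_Ici_self ht)).deriv]; exact h0 t ht

lemma sinh_lt_mul_cosh {x : ℝ} (hx : 0 < x) : Real.sinh x < x * Real.cosh x := by
  have h := strict_mono_Icc (f := fun t => t * Real.cosh t - Real.sinh t)
    (f' := fun t => t * Real.sinh t) (a := 0) (b := x)
    (by fun_prop) ?_ ?_ (left_mem_Icc.2 hx.le) (right_mem_Icc.2 hx.le) hx
  · simpa using h
  · intro t _
    have h1 := (hasDerivAt_id t).mul (Real.hasDerivAt_cosh t)
    have h2 := h1.sub (Real.hasDerivAt_sinh t)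
    exact h2.congr_deriv (by simp only [id_eq]; ring)
  · intro t ht
    exact mul_pos ht.1 (Real.sinh_pos_iff.2 ht.1)

lemma key_lt {x : ℝ} (hx : 0 < x) :
    3 * (x * Real.cosh x - Real.sinh x) < x ^ 2 * Real.sinh x := by
  have h := strict_mono_Icc (f := fun t => t ^ 2 * Real.sinh t + 3 * Real.sinh t - 3 * (t * Real.cosh t))
    (f' := fun t => t * (t * Real.cosh t - Real.sinh t)) (a := 0) (b := x)
    (by fun_prop) ?_ ?_ (left_mem_Icc.2 hx.le) (right_mem_Icc.2 hx.le) hx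
  · simp only [zero_pow, Real.sinh_zero, Real.cosh_zero] at h
    nlinarith [h]
  · intro t _
    have h1 := ((hasDerivAt_pow 2 t).mul (Real.hasDerivAt_sinh t)).add
      ((Real.hasDerivAt_sinh t).const_mul 3)
    have h2 := h1.sub (((hasDerivAt_id t).mul (Real.hasDerivAt_cosh t)).const_mul 3)
    exact h2.congr_deriv (by simp only [id_eq]; push_cast; ring)
  · intro t ht
    exact mul_pos ht.1 (by nlinarith [sinh_lt_mul_cosh ht.1])

lemma key_cube {x : ℝ} (hx : 0 ≤ x) :
    x ^ 3 ≤ 3 * (x * Real.cosh x - Real.sinh x) := by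
  rcases eq_or_lt_of_le hx with rfl | hx
  · simp
  have h := mono_Icc (f := fun t => 3 * (t * Real.cosh t) - 3 * Real.sinh t - t ^ 3)
    (f' := fun t => 3 * t * (Real.sinh t - t)) (a := 0) (b := x)
    (by fun_prop) ?_ ?_ (left_mem_Icc.2 hx.le) (right_mem_Icc.2 hx.le) hx.le
  · simp only [Real.sinh_zero, Real.cosh_zero] at h
    nlinarith [h]
  · intro t _
    have h1 := (((hasDerivAt_id t).mul (Real.hasDerivAt_cosh t)).const_mul 3).sub
      ((Real.hasDerivAt_sinh t).const_mul 3)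
    have h2 := h1.sub (hasDerivAt_pow 3 t)
    exact h2.congr_deriv (by simp only [id_eq]; push_cast; ring)
  · intro t ht
    show 0 ≤ 3 * t * (Real.sinh t - t)
    have := Real.self_lt_sinh_iff.2 ht.1
    nlinarith [mul_pos ht.1 (sub_pos.2 this)]

lemma P0_eq {x : ℝ} (hx : 0 < x) :
    P0 x = (x * Real.cosh x - Real.sinh x) / (Real.sinh x * x ^ 2) := by
  have hs := Real.sinh_pos_iff.2 hx
  unfold P0
  field_simp

lemma P0_lt_third {x : ℝ} (hx : 0 < x) : P0 x < 1 / 3 := by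
  have hs := Real.sinh_pos_iff.2 hx
  rw [P0_eq hx, div_lt_div_iff₀ (by positivity) (by norm_num)]
  nlinarith [key_lt hx]

lemma P0_nonneg {x : ℝ} (hx : 0 < x) : 0 ≤ P0 x := by
  have hs := Real.sinh_pos_iff.2 hx
  rw [P0_eq hx]
  have := sinh_lt_mul_cosh hx
  exact div_nonneg (by nlinarith) (by positivity)

lemma P0_ge_inv_cosh {x : ℝ} (hx : 0 < x) : 1 / (3 * Real.cosh x) ≤ P0 x := by
  have hs := Real.sinh_pos_iff.2 hx
  have hc := Real.cosh_pos (x := x)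
  rw [P0_eq hx, div_le_div_iff₀ (by positivity) (by positivity)]
  have h1 := key_cube hx.le
  have h2 := sinh_lt_mul_cosh hx
  nlinarith [hc, hx, mul_le_mul_of_nonneg_left h1 hc.le,
    mul_le_mul_of_nonneg_left h2.le (sq_nonneg x)]

section periodic
variable {T : ℝ} {Φ : ℝ → ℝ}

lemma phi_bounds (hT : 0 < T) (hΦc : Continuous Φ) (hΦpos : ∀ t, 0 < Φ t)
    (hΦper : ∀ t, Φ (t + T) = Φ t) :
    ∃ m M : ℝ, 0 < m ∧ 0 < M ∧ (∀ s, m ≤ Φ s) ∧ (∀ s, Φ s ≤ M) := by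
  have hper : Function.Periodic Φ T := hΦper
  obtain ⟨a, ha, hamax⟩ := isCompact_Icc.exists_isMaxOn (f := Φ)
    (Set.nonempty_Icc.2 hT.le) (hΦc.continuousOn (s := Set.Icc 0 T))
  obtain ⟨b, hb, hbmin⟩ := isCompact_Icc.exists_isMinOn (f := Φ)
    (Set.nonempty_Icc.2 hT.le) (hΦc.continuousOn (s := Set.Icc 0 T))
  refine ⟨Φ b, Φ a, hΦpos b, hΦpos a, fun s => ?_, fun s => ?_⟩ <;>
  · obtain ⟨y, hy, hys⟩ := hper.exists_mem_Ico₀ hT s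
    rw [hys]
    first
    | exact hbmin (Set.mem_Icc.2 ⟨hy.1, hy.2.le⟩)
    | exact hamax (Set.mem_Icc.2 ⟨hy.1, hy.2.le⟩)

lemma integral_chunk_bounds (hΦc : Continuous Φ) {M a b : ℝ} (hab : a ≤ b)
    (hpos : ∀ t, 0 < Φ t) (hM : ∀ s, Φ s ≤ M) :
    0 ≤ (∫ s in a..b, Φ s) ∧ (∫ s in a..b, Φ s) ≤ (b - a) * M := by
  constructor
  · exact intervalIntegral.integral_nonneg hab (fun u _ => (hpos u).le)
  · calc (∫ s in a..b, Φ s) ≤ ∫ _ in a..b, M := by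
          apply intervalIntegral.integral_mono_on hab
            (hΦc.intervalIntegrable _ _) (intervalIntegrable_const)
          exact fun x _ => hM x
       _ = (b - a) * M := by simp [smul_eq_mul]

lemma G_bounds (hT : 0 < T) (hΦc : Continuous Φ) (hΦpos : ∀ t, 0 < Φ t)
    (hΦper : ∀ t, Φ (t + T) = Φ t) {M : ℝ} (hM : ∀ s, Φ s ≤ M) {t : ℝ} (ht : 0 ≤ t) :
    (1 / T * ∫ s in (0:ℝ)..T, Φ s) * (t - T) ≤ (∫ s in (0:ℝ)..t, Φ s) ∧
    (∫ s in (0:ℝ)..t, Φ s) ≤ (1 / T * ∫ s in (0:ℝ)..T, Φ s) * t + T * M := by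
  have hper : Function.Periodic Φ T := hΦper
  have hint : ∀ t₁ t₂ : ℝ, IntervalIntegrable Φ MeasureTheory.volume t₁ t₂ :=
    fun t₁ t₂ => hΦc.intervalIntegrable _ _
  set Q := ∫ s in (0:ℝ)..T, Φ s with hQdef
  have hQ0 : 0 ≤ Q := (integral_chunk_bounds hΦc hT.le hΦpos hM).1
  set n := ⌊t / T⌋₊ with hn
  have hn1 : (n : ℝ) * T ≤ t := by
    have h := Nat.floor_le (div_nonneg ht hT.le)
    calc (n:ℝ) * T ≤ t / T * T := by
          apply mul_le_mul_of_nonneg_right _ hT.le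
          exact_mod_cast h
      _ = t := by field_simp
  have hn2 : t < ((n : ℝ) + 1) * T := by
    have h := Nat.lt_floor_add_one (t / T)
    calc t = t / T * T := by field_simp
      _ < ((n:ℝ) + 1) * T := by
          apply mul_lt_mul_of_pos_right _ hT
          exact_mod_cast h
  have hsplit : (∫ s in (0:ℝ)..(n : ℝ) * T, Φ s) + (∫ s in ((n : ℝ) * T)..t, Φ s)
      = ∫ s in (0:ℝ)..t, Φ s :=
    intervalIntegral.integral_add_adjacent_intervals (hint _ _) (hint _ _)
  have hfirst : (∫ s in (0:ℝ)..(n : ℝ) * T, Φ s) = (n : ℝ) * Q := by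
    have := hper.intervalIntegral_add_zsmul_eq (n : ℤ) 0 hint
    simpa [zsmul_eq_mul] using this
  have hchunk := integral_chunk_bounds hΦc hn1 hΦpos hM (a := (n:ℝ) * T) (b := t)
  have hMpos : 0 < M := lt_of_lt_of_le (hΦpos 0) (hM 0)
  constructor
  · rw [← hsplit, hfirst]
    have h1 : 1 / T * Q * (t - T) ≤ 1 / T * Q * ((n:ℝ) * T) := by
      apply mul_le_mul_of_nonneg_left _ (by positivity)
      nlinarith
    have h2 : 1 / T * Q * ((n:ℝ) * T) = (n : ℝ) * Q := by field_simp
    nlinarith [hchunk.1]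
  · rw [← hsplit, hfirst]
    have h2 : (n : ℝ) * Q = 1 / T * Q * ((n:ℝ) * T) := by field_simp
    have h3 : 1 / T * Q * ((n:ℝ) * T) ≤ 1 / T * Q * t :=
      mul_le_mul_of_nonneg_left hn1 (by positivity)
    nlinarith [hchunk.2]

end periodic

lemma P0_bound_on_compact {a b : ℝ} (ha : 0 < a) (hab : a ≤ b) :
    ∃ δ > 0, ∀ x ∈ Set.Icc a b, P0 x ≤ 1 / 3 - δ := by
  have hcont : ContinuousOn P0 (Set.Icc a b) := by
    apply ContinuousOn.div
    · exact (continuousOn_id.mul ((Real.continuous_cosh.continuousOn).div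
        (Real.continuous_sinh.continuousOn)
        (fun x hx => (Real.sinh_pos_iff.2 (lt_of_lt_of_le ha hx.1)).ne'))).sub continuousOn_const
    · exact (continuousOn_id.pow 2)
    · exact fun x hx => pow_ne_zero 2 (ne_of_gt (lt_of_lt_of_le ha hx.1))
  obtain ⟨c, hc, hcmax⟩ := isCompact_Icc.exists_isMaxOn (Set.nonempty_Icc.2 hab) hcont
  refine ⟨1 / 3 - P0 c, by linarith [P0_lt_third (lt_of_lt_of_le ha hc.1)], fun x hx => ?_⟩
  have h2 : P0 x ≤ P0 c := hcmax hx
  linarith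

set_option maxHeartbeats 1000000 in
theorem forward_dir
    (T : ℝ) (hT : 0 < T) (Φ : ℝ → ℝ) (hΦc : Continuous Φ)
    (hΦpos : ∀ t, 0 < Φ t) (hΦper : ∀ t, Φ (t + T) = Φ t)
    (μ σ : ℝ) (hμ : 0 < μ) (hσ : 0 < σ)
    (hge : σ ≥ (1 / T) * ∫ t in (0 : ℝ)..T, Φ t)
    (R : ℝ → ℝ) (hRpos : ∀ t, 0 ≤ t → 0 < R t)
    (hRode : ∀ t, 0 ≤ t → HasDerivAt R (μ * R t * (Φ t * P0 (R t) - σ / 3)) t) :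
    Filter.Tendsto R Filter.atTop (nhds 0) := by
  obtain ⟨m, M, hm, hM0, hmle, hMle⟩ := phi_bounds hT hΦc hΦpos hΦper
  set Q := ∫ s in (0:ℝ)..T, Φ s with hQdef
  set Φbar := 1 / T * Q with hPhibar
  have hΦbar0 : 0 < Φbar := by
    have : 0 < Q := intervalIntegral.intervalIntegral_pos_of_pos_on
      (hΦc.intervalIntegrable _ _) (fun x _ => hΦpos x) hT
    positivity
  set L := fun t => Real.log (R t) with hLdef
  set G := fun t => ∫ s in (0:ℝ)..t, Φ s with hGdef
  have hGd : ∀ t : ℝ, HasDerivAt G (Φ t) t := fun t =>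
    (hΦc.integral_hasStrictDerivAt 0 t).hasDerivAt
  have hLd : ∀ t, 0 ≤ t → HasDerivAt L (μ * (Φ t * P0 (R t) - σ / 3)) t := by
    intro t ht
    have h := (hRode t ht).log (hRpos t ht).ne'
    convert h using 1
    field_simp [(hRpos t ht).ne']
  set V := fun t => L t - μ / 3 * G t + μ * σ / 3 * t with hVdef
  have hVd : ∀ t, 0 ≤ t → HasDerivAt V (μ * Φ t * (P0 (R t) - 1 / 3)) t := by
    intro t ht
    have h := ((hLd t ht).sub ((hGd t).const_mul (μ / 3))).add
      ((hasDerivAt_id t).const_mul (μ * σ / 3))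
    exact h.congr_deriv (by ring)
  have hVanti : ∀ x y, 0 ≤ x → x ≤ y → V y ≤ V x := by
    intro x y hx hxy
    refine anti_Ici (f' := fun t => μ * Φ t * (P0 (R t) - 1 / 3))
      (fun t ht => hVd t ht) ?_ hx (le_trans hx hxy) hxy
    intro t ht
    have h1 := P0_lt_third (hRpos t (le_of_lt ht))
    have h2 := mul_pos hμ (hΦpos t)
    nlinarith
  have hLeq : ∀ t, L t = V t + μ / 3 * G t - μ * σ / 3 * t := by
    intro t; simp only [hVdef]; ring
  have hGb : ∀ t, 0 ≤ t → Φbar * (t - T) ≤ G t ∧ G t ≤ Φbar * t + T * M :=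
    fun t ht => G_bounds hT hΦc hΦpos hΦper hMle ht
  have hLR : ∀ t, L t = Real.log (R t) := fun t => rfl
  clear_value V
  clear_value L
  clear_value G
  clear_value Φbar
  clear_value Q
  have hLbot : Filter.Tendsto L Filter.atTop Filter.atBot := by
    rcases (hge : Φbar ≤ σ).eq_or_lt with heq | hlt
    · -- critical case σ = Φbar
      have hVbot : Filter.Tendsto V Filter.atTop Filter.atBot := by
        have hsuff : ∀ b : ℝ, ∃ t, 0 ≤ t ∧ V t ≤ b := by
          by_contra hcon
          push_neg at hcon
          obtain ⟨b, hb⟩ := hcon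
          have hbV : ∀ t, 0 ≤ t → b < V t := fun t ht => hb t ht
          set l₁ := b - μ / 3 * T * Φbar with hl₁
          set l₂ := V 0 + μ / 3 * T * M with hl₂
          have hLlow : ∀ t, 0 ≤ t → l₁ ≤ L t := by
            intro t ht
            have h2 := hbV t ht
            have h1 := mul_le_mul_of_nonneg_left (hGb t ht).1
              (by positivity : (0:ℝ) ≤ μ / 3)
            rw [hLeq t, ← heq]
            nlinarith [h1, h2]
          have hLhigh : ∀ t, 0 ≤ t → L t ≤ l₂ := by
            intro t ht
            have h2 := hVanti 0 t le_rfl ht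
            have h1 := mul_le_mul_of_nonneg_left (hGb t ht).2
              (by positivity : (0:ℝ) ≤ μ / 3)
            rw [hLeq t, ← heq]
            nlinarith [h1, h2]
          have hl12 : l₁ ≤ l₂ := le_trans (hLlow 0 le_rfl) (hLhigh 0 le_rfl)
          obtain ⟨δ, hδ, hPb⟩ := P0_bound_on_compact (Real.exp_pos l₁)
            (Real.exp_le_exp.2 hl12)
          have hRmem : ∀ t, 0 ≤ t → R t ∈ Set.Icc (Real.exp l₁) (Real.exp l₂) := by
            intro t ht
            have : R t = Real.exp (L t) := by
              rw [hLR t]; exact (Real.exp_log (hRpos t ht)).symm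
            rw [this]
            exact ⟨Real.exp_le_exp.2 (hLlow t ht), Real.exp_le_exp.2 (hLhigh t ht)⟩
          set W := fun t => V t + μ * m * δ * t with hWdef
          have hWanti : ∀ t, 0 ≤ t → W t ≤ W 0 := by
            intro t ht
            refine anti_Ici (f' := fun t => μ * Φ t * (P0 (R t) - 1 / 3) + μ * m * δ)
              (fun s hs => (hVd s hs).add ((hasDerivAt_id s).const_mul (μ * m * δ) |>.congr_deriv (by simp))) ?_ Set.self_mem_Ici ht ht
            intro s hs
            show μ * Φ s * (P0 (R s) - 1 / 3) + μ * m * δ ≤ 0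
            have h1 := hPb (R s) (hRmem s (le_of_lt hs))
            have h3 := hΦpos s
            have hA : μ * Φ s * (P0 (R s) - 1 / 3) ≤ μ * Φ s * (-δ) :=
              mul_le_mul_of_nonneg_left (by linarith) (mul_pos hμ h3).le
            have hB : μ * m * δ ≤ μ * Φ s * δ :=
              mul_le_mul_of_nonneg_right
                (mul_le_mul_of_nonneg_left (hmle s) hμ.le) hδ.le
            nlinarith [hA, hB]
          have hkey : ∀ t, 0 ≤ t → V t ≤ V 0 - μ * m * δ * t := by
            intro t ht
            have := hWanti t ht
            simp only [hWdef] at this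
            nlinarith
          set t₀ := max 0 ((V 0 - b) / (μ * m * δ) + 1) with ht₀
          have ht₀0 : 0 ≤ t₀ := le_max_left _ _
          have hcontr := hkey t₀ ht₀0
          have hbig : (V 0 - b) / (μ * m * δ) + 1 ≤ t₀ := le_max_right _ _
          have hpos : 0 < μ * m * δ := by positivity
          have : μ * m * δ * t₀ ≥ V 0 - b + μ * m * δ := by
            have := mul_le_mul_of_nonneg_left hbig hpos.le
            calc μ * m * δ * t₀ ≥ μ * m * δ * ((V 0 - b) / (μ * m * δ) + 1) := by nlinarith
              _ = V 0 - b + μ * m * δ := by field_simp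
          have hVt₀ := hbV t₀ ht₀0
          nlinarith
        rw [Filter.tendsto_atBot]
        intro b
        obtain ⟨t₁, ht₁0, ht₁⟩ := hsuff b
        filter_upwards [Filter.eventually_ge_atTop t₁] with t ht
        exact le_trans (hVanti t₁ t ht₁0 ht) ht₁
      have hub : ∀ t, 0 ≤ t → L t ≤ V t + μ / 3 * T * M := by
        intro t ht
        have h1 := mul_le_mul_of_nonneg_left (hGb t ht).2
          (by positivity : (0:ℝ) ≤ μ / 3)
        rw [hLeq t, ← heq]
        nlinarith [h1]
      have h2 : Filter.Tendsto (fun t => V t + μ / 3 * T * M) Filter.atTop Filter.atBot :=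
        Filter.tendsto_atBot_add_const_right _ _ hVbot
      apply Filter.tendsto_atBot_mono' _ _ h2
      filter_upwards [Filter.eventually_ge_atTop 0] with t ht
      exact hub t ht
    · -- easy case σ > Φbar
      have hub : ∀ t, 0 ≤ t → L t ≤ (V 0 + μ / 3 * T * M) + μ / 3 * (Φbar - σ) * t := by
        intro t ht
        have h1 := mul_le_mul_of_nonneg_left (hGb t ht).2
          (by positivity : (0:ℝ) ≤ μ / 3)
        have h2 := hVanti 0 t le_rfl ht
        rw [hLeq t]
        nlinarith [h1, h2]
      have h2 : Filter.Tendsto (fun t => (V 0 + μ / 3 * T * M) + μ / 3 * (Φbar - σ) * t)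
          Filter.atTop Filter.atBot := by
        apply Filter.tendsto_atBot_add_const_left
        have hc : μ / 3 * (Φbar - σ) < 0 := by nlinarith
        exact (Filter.tendsto_const_mul_atBot_of_neg hc).2 Filter.tendsto_id
      apply Filter.tendsto_atBot_mono' _ _ h2
      filter_upwards [Filter.eventually_ge_atTop 0] with t ht
      exact hub t ht
  have hexp : Filter.Tendsto (fun t => Real.exp (L t)) Filter.atTop (nhds 0) :=
    Real.tendsto_exp_atBot.comp hLbot
  apply hexp.congr'
  filter_upwards [Filter.eventually_ge_atTop 0] with t ht
  rw [hLR t]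
  exact Real.exp_log (hRpos t ht)

noncomputable def qfun (x : ℝ) : ℝ :=
  if x = 0 then 0 else Real.cosh x / Real.sinh x - 1 / x

lemma qfun_eq_mul_P0 {x : ℝ} (hx : 0 < x) : qfun x = x * P0 x := by
  have hs := Real.sinh_pos_iff.2 hx
  rw [qfun, if_neg hx.ne', P0]
  field_simp

lemma qfun_nonneg {x : ℝ} (hx : 0 ≤ x) : 0 ≤ qfun x := by
  rcases eq_or_lt_of_le hx with rfl | hx
  · simp [qfun]
  · rw [qfun_eq_mul_P0 hx]; exact mul_nonneg hx.le (P0_nonneg hx)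

lemma qfun_le_third {x : ℝ} (hx : 0 ≤ x) : qfun x ≤ x / 3 := by
  rcases eq_or_lt_of_le hx with rfl | hx
  · simp [qfun]
  · rw [qfun_eq_mul_P0 hx]
    have := P0_lt_third hx
    nlinarith

lemma qfun_lt_one {x : ℝ} (hx : 0 ≤ x) : qfun x < 1 := by
  rcases eq_or_lt_of_le hx with rfl | hx
  · simp [qfun]
  · have hs := Real.sinh_pos_iff.2 hx
    rw [qfun, if_neg hx.ne']
    rw [div_sub_div _ _ hs.ne' hx.ne', div_lt_one (by positivity)]
    have h1 : Real.cosh x - Real.sinh x = Real.exp (-x) := Real.cosh_sub_sinh x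
    have h2 : Real.exp (-x) < 1 := by
      rw [Real.exp_lt_one_iff]; linarith
    have h3 := Real.self_lt_sinh_iff.2 hx
    have h4 : x * (Real.cosh x - Real.sinh x) < x := by
      calc x * (Real.cosh x - Real.sinh x) = x * Real.exp (-x) := by rw [h1]
        _ < x * 1 := by exact mul_lt_mul_of_pos_left h2 hx
        _ = x := mul_one x
    nlinarith [h4, h3]

lemma qfun_hasDerivAt {x : ℝ} (hx : 0 < x) :
    HasDerivAt qfun (1 / x ^ 2 - 1 / Real.sinh x ^ 2) x := by
  have hs := Real.sinh_pos_iff.2 hx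
  have h1 : HasDerivAt (fun y => Real.cosh y / Real.sinh y - 1 / y)
      ((Real.sinh x * Real.sinh x - Real.cosh x * Real.cosh x) / Real.sinh x ^ 2
        - (-(1 / x ^ 2))) x := by
    have hd1 := (Real.hasDerivAt_cosh x).div (Real.hasDerivAt_sinh x) hs.ne'
    have hd2 : HasDerivAt (fun y : ℝ => 1 / y) (-(1 / x ^ 2)) x := by
      simpa [one_div] using (hasDerivAt_inv hx.ne')
    exact hd1.sub hd2
  have h2 : (Real.sinh x * Real.sinh x - Real.cosh x * Real.cosh x) / Real.sinh x ^ 2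
      - (-(1 / x ^ 2)) = 1 / x ^ 2 - 1 / Real.sinh x ^ 2 := by
    have hc := Real.cosh_sq_sub_sinh_sq x
    have h3 : Real.sinh x * Real.sinh x - Real.cosh x * Real.cosh x = -1 := by nlinarith [hc]
    rw [h3]; ring
  rw [h2] at h1
  apply h1.congr_of_eventuallyEq
  filter_upwards [eventually_ne_nhds hx.ne'] with y hy
  rw [qfun, if_neg hy]

lemma qfun_deriv_bound {x : ℝ} (hx : 0 < x) :
    |1 / x ^ 2 - 1 / Real.sinh x ^ 2| ≤ 1 := by
  have hs := Real.sinh_pos_iff.2 hx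
  have h1 := Real.self_lt_sinh_iff.2 hx
  have h2 := sinh_lt_mul_cosh hx
  have hcsq := Real.cosh_sq_sub_sinh_sq x
  rw [abs_le]
  constructor
  · have : 1 / Real.sinh x ^ 2 ≤ 1 / x ^ 2 := by
      rw [div_le_div_iff₀ (by positivity) (by positivity)]
      nlinarith
    linarith
  · rw [div_sub_div _ _ (by positivity : x ^ 2 ≠ 0) (by positivity : Real.sinh x ^ 2 ≠ 0),
      div_le_one (by positivity)]
    nlinarith [sq_nonneg (Real.sinh x - x), sq_nonneg x, mul_pos hx hs]

lemma qfun_lip {x y : ℝ} (hx : 0 ≤ x) (hy : 0 ≤ y) : |qfun x - qfun y| ≤ |x - y| := by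
  wlog hxy : y ≤ x generalizing x y
  · rw [abs_sub_comm, abs_sub_comm x y]; exact this hy hx (le_of_not_ge hxy)
  rcases eq_or_lt_of_le hy with rfl | hy'
  · have hq0 : qfun 0 = 0 := by simp [qfun]
    rw [hq0, sub_zero, sub_zero, abs_of_nonneg (qfun_nonneg hx), abs_of_nonneg hx]
    linarith [qfun_le_third hx]
  · have key := Convex.norm_image_sub_le_of_norm_hasDerivWithin_le
      (f := qfun) (f' := fun z => 1 / z ^ 2 - 1 / Real.sinh z ^ 2) (C := 1)
      (s := Set.Icc y x)
      (fun z hz => (qfun_hasDerivAt (lt_of_lt_of_le hy' hz.1)).hasDerivWithinAt)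
      (fun z hz => by
        rw [Real.norm_eq_abs]; exact qfun_deriv_bound (lt_of_lt_of_le hy' hz.1))
      (convex_Icc y x) (Set.left_mem_Icc.2 hxy) (Set.right_mem_Icc.2 hxy)
    rw [Real.norm_eq_abs, Real.norm_eq_abs, one_mul] at key
    exact key

set_option maxHeartbeats 1600000 in
lemma exists_solution
    (T : ℝ) (hT : 0 < T) (Φ : ℝ → ℝ) (hΦc : Continuous Φ)
    (hΦpos : ∀ t, 0 < Φ t) (hΦper : ∀ t, Φ (t + T) = Φ t)
    (μ σ : ℝ) (hμ : 0 < μ) (hσ : 0 < σ) :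
    ∃ R : ℝ → ℝ, (∀ t, 0 ≤ t → 0 < R t) ∧
      (∀ t, 0 ≤ t → HasDerivAt R (μ * R t * (Φ t * P0 (R t) - σ / 3)) t) := by
  obtain ⟨m, M, hm, hM0, hmle, hMle⟩ := phi_bounds hT hΦc hΦpos hΦper
  set B := max 1 (3 * M / σ) with hBdef
  have hB1 : 1 ≤ B := le_max_left _ _
  have hB0 : 0 < B := lt_of_lt_of_le one_pos hB1
  have hBM : M ≤ σ * B / 3 := by
    have h := le_max_right 1 (3 * M / σ)
    rw [div_le_iff₀ hσ] at h
    nlinarith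
  set c := fun x : ℝ => max 0 (min x B) with hcdef
  have hc_mem : ∀ x, c x ∈ Set.Icc (0:ℝ) B :=
    fun x => ⟨le_max_left _ _, max_le hB0.le (min_le_right _ _)⟩
  have hc_id : ∀ x, 0 ≤ x → x ≤ B → c x = x := by
    intro x h1 h2; simp only [hcdef]; rw [min_eq_left h2, max_eq_right h1]
  have hc_B : ∀ x, B ≤ x → c x = B := by
    intro x h1; simp only [hcdef]; rw [min_eq_right h1, max_eq_right hB0.le]
  have hc_lip : ∀ x y, |c x - c y| ≤ |x - y| := by
    intro x y
    simp only [hcdef]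
    calc |max 0 (min x B) - max 0 (min y B)| = |max (min x B) 0 - max (min y B) 0| := by
          rw [max_comm 0 (min x B), max_comm 0 (min y B)]
      _ ≤ |min x B - min y B| := abs_max_sub_max_le_abs _ _ _
      _ ≤ max |x - y| |B - B| := abs_min_sub_min_le_max _ _ _ _
      _ = |x - y| := by simp
  set f := fun (t x : ℝ) => μ * (Φ t * qfun (c x) - σ / 3 * c x) with hfdef
  set Cb := μ * (M + σ / 3 * B) with hCbdef
  have hCb0 : 0 < Cb := by positivity
  have hq_mem : ∀ x : ℝ, 0 ≤ qfun (c x) ∧ qfun (c x) < 1 :=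
    fun x => ⟨qfun_nonneg (hc_mem x).1, qfun_lt_one (hc_mem x).1⟩
  have hfb : ∀ t x, |f t x| ≤ Cb := by
    intro t x
    simp only [hfdef, hCbdef]
    rw [abs_mul, abs_of_pos hμ]
    apply mul_le_mul_of_nonneg_left _ hμ.le
    have h1 := hq_mem x
    have h2 := hc_mem x
    have h3 := hΦpos t
    have h4 := hMle t
    rw [abs_sub_le_iff]
    constructor <;> nlinarith [h1.1, h1.2, h2.1, h2.2, hσ]
  set K : NNReal := (μ * (M + σ / 3)).toNNReal with hKdef
  have hKco : (K : ℝ) = μ * (M + σ / 3) := Real.coe_toNNReal _ (by positivity)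
  have hlip : ∀ t, LipschitzWith K (f t) := by
    intro t
    apply LipschitzWith.of_dist_le_mul
    intro x y
    rw [Real.dist_eq, Real.dist_eq, hKco]
    simp only [hfdef]
    have h1 : μ * (Φ t * qfun (c x) - σ / 3 * c x) - μ * (Φ t * qfun (c y) - σ / 3 * c y)
        = μ * (Φ t * (qfun (c x) - qfun (c y)) - σ / 3 * (c x - c y)) := by ring
    rw [h1, abs_mul, abs_of_pos hμ, mul_assoc]
    apply mul_le_mul_of_nonneg_left _ hμ.le
    have h2 : |Φ t * (qfun (c x) - qfun (c y)) - σ / 3 * (c x - c y)|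
        ≤ Φ t * |qfun (c x) - qfun (c y)| + σ / 3 * |c x - c y| := by
      calc |Φ t * (qfun (c x) - qfun (c y)) - σ / 3 * (c x - c y)|
          ≤ |Φ t * (qfun (c x) - qfun (c y))| + |σ / 3 * (c x - c y)| := abs_sub _ _
        _ = Φ t * |qfun (c x) - qfun (c y)| + σ / 3 * |c x - c y| := by
            rw [abs_mul, abs_mul, abs_of_pos (hΦpos t), abs_of_pos (by positivity : (0:ℝ) < σ / 3)]
    have h3 : |qfun (c x) - qfun (c y)| ≤ |x - y| :=
      le_trans (qfun_lip (hc_mem x).1 (hc_mem y).1) (hc_lip x y)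
    have h4 : |c x - c y| ≤ |x - y| := hc_lip x y
    have h5 := hΦpos t
    have h6 := hMle t
    calc |Φ t * (qfun (c x) - qfun (c y)) - σ / 3 * (c x - c y)|
        ≤ Φ t * |qfun (c x) - qfun (c y)| + σ / 3 * |c x - c y| := h2
      _ ≤ M * |x - y| + σ / 3 * |x - y| := by
          apply add_le_add
          · calc Φ t * |qfun (c x) - qfun (c y)| ≤ Φ t * |x - y| :=
                  mul_le_mul_of_nonneg_left h3 h5.le
              _ ≤ M * |x - y| := mul_le_mul_of_nonneg_right h6 (abs_nonneg _)
          · exact mul_le_mul_of_nonneg_left h4 (by positivity)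
      _ = (M + σ / 3) * |x - y| := by ring
  have hpl : ∀ (t₀ x₀ : ℝ), IsPicardLindelof f (tmin := t₀) (tmax := t₀ + 1)
      ⟨t₀, le_rfl, by linarith⟩ x₀ Cb.toNNReal 0 Cb.toNNReal K := by
    intro t₀ x₀
    refine ⟨?_, ?_, ?_, ?_⟩
    · exact fun t _ => ((hlip t).lipschitzOnWith)
    · intro x _
      apply Continuous.continuousOn
      simp only [hfdef]
      fun_prop
    · exact fun t _ x _ => by
        rw [Real.norm_eq_abs, Real.coe_toNNReal _ hCb0.le]; exact hfb t x
    · have : max (t₀ + 1 - t₀) (t₀ - t₀) = 1 := by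
        rw [add_sub_cancel_left, sub_self]; norm_num
      simp only [this, mul_one, NNReal.coe_zero, sub_zero, le_refl]
  have hkey : ∀ (t₀ x₀ : ℝ), ∃ g : ℝ → ℝ, g t₀ = x₀ ∧
      ∀ t ∈ Set.Icc t₀ (t₀ + 1), HasDerivWithinAt g (f t (g t)) (Set.Icc t₀ (t₀ + 1)) t :=
    fun t₀ x₀ => (hpl t₀ x₀).exists_eq_forall_mem_Icc_hasDerivWithinAt₀
  -- recursive construction of solutions on [n-1, n]
  set G : ℕ → ℝ → ℝ := fun n => Nat.rec (hkey (-1) 1).choose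
    (fun k ih => (hkey k (ih k)).choose) n with hGdef
  have hG0 : G 0 (-1) = 1 := (hkey (-1) 1).choose_spec.1
  have hGsucc : ∀ n : ℕ, G (n + 1) (n : ℝ) = G n (n : ℝ) :=
    fun n => (hkey (n : ℝ) (G n (n : ℝ))).choose_spec.1
  have hGd : ∀ n : ℕ, ∀ t ∈ Set.Icc ((n : ℝ) - 1) (n : ℝ),
      HasDerivWithinAt (G n) (f t (G n t)) (Set.Icc ((n : ℝ) - 1) (n : ℝ)) t := by
    intro n
    cases n with
    | zero =>
      have h := (hkey (-1) 1).choose_spec.2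
      intro t ht
      have e3 : Set.Icc (((0:ℕ):ℝ) - 1) ((0:ℕ):ℝ) = Set.Icc (-1:ℝ) (-1 + 1) := by norm_num
      rw [e3] at ht ⊢
      exact h t ht
    | succ k =>
      have h := (hkey (k : ℝ) (G k (k : ℝ))).choose_spec.2
      intro t ht
      have e3 : Set.Icc (((k + 1:ℕ):ℝ) - 1) ((k + 1:ℕ):ℝ) = Set.Icc (k:ℝ) ((k:ℝ) + 1) := by
        push_cast; norm_num
      rw [e3] at ht ⊢
      exact h t ht
  set R : ℝ → ℝ := fun t => if t < 0 then G 0 t else G (⌊t⌋₊ + 1) t with hRdef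
  have hRG : ∀ n : ℕ, ∀ t ∈ Set.Icc ((n : ℝ) - 1) (n : ℝ), R t = G n t := by
    intro n t ht
    rcases lt_or_ge t 0 with h0 | h0
    · rw [hRdef]; simp only [if_pos h0]
      cases n with
      | zero => rfl
      | succ k =>
        exfalso
        have : ((k + 1 : ℕ) : ℝ) - 1 = (k : ℝ) := by push_cast; ring
        rw [this] at ht
        have := ht.1
        have hk : (0:ℝ) ≤ (k : ℝ) := Nat.cast_nonneg k
        linarith
    · rw [hRdef]; simp only [if_neg (not_lt.2 h0)]
      cases n with
      | zero =>
        have ht0 : t = 0 := le_antisymm (by exact_mod_cast ht.2) h0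
        subst ht0
        have : ⌊(0:ℝ)⌋₊ = 0 := by norm_num
        rw [this]
        have := hGsucc 0
        simpa using this
      | succ k =>
        rcases eq_or_lt_of_le ht.2 with heq | hlt
        · -- t = k+1
          rw [heq]
          have hfl : ⌊((k + 1 : ℕ) : ℝ)⌋₊ = k + 1 := Nat.floor_natCast _
          rw [hfl]
          exact hGsucc (k + 1)
        · -- t < k+1
          have h1 : ((k + 1 : ℕ) : ℝ) - 1 = (k : ℝ) := by push_cast; ring
          rw [h1] at ht
          have hfl : ⌊t⌋₊ = k := by
            rw [Nat.floor_eq_iff h0]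
            refine ⟨ht.1, ?_⟩
            push_cast
            push_cast at hlt
            linarith
          rw [hfl]
  have hRd : ∀ t : ℝ, -1 < t → HasDerivAt R (f t (R t)) t := by
    have haux : ∀ n : ℕ, ∀ t : ℝ, (n : ℝ) - 1 < t → t < (n : ℝ) →
        HasDerivAt R (f t (R t)) t := by
      intro n t h1 h2
      have hmem : t ∈ Set.Icc ((n : ℝ) - 1) (n : ℝ) := ⟨h1.le, h2.le⟩
      have hd := (hGd n t hmem).hasDerivAt (Icc_mem_nhds h1 h2)
      have heq : R =ᶠ[nhds t] G n := by
        filter_upwards [Ioo_mem_nhds h1 h2] with s hs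
        exact hRG n s (Set.Ioo_subset_Icc_self hs)
      have hfin := hd.congr_of_eventuallyEq heq
      rwa [← hRG n t hmem] at hfin
    intro t ht
    rcases lt_or_ge t 0 with h0 | h0
    · apply haux 0 t _ _
      · push_cast; linarith
      · push_cast; linarith
    · rcases eq_or_lt_of_le (Nat.floor_le h0) with heq | hlt
      · -- t is a natural number
        set n := ⌊t⌋₊ with hn
        -- heq : ↑n = t
        have hmem1 : (n : ℝ) ∈ Set.Icc ((n : ℝ) - 1) (n : ℝ) := ⟨by linarith, le_rfl⟩
        have hl0 : HasDerivWithinAt R (f (n : ℝ) (G n (n : ℝ)))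
            (Set.Icc ((n : ℝ) - 1) (n : ℝ)) (n : ℝ) :=
          (hGd n (n : ℝ) hmem1).congr (fun s hs => hRG n s hs) (hRG n (n : ℝ) hmem1)
        have hlI : HasDerivWithinAt R (f (n : ℝ) (G n (n : ℝ))) (Set.Iic (n : ℝ)) (n : ℝ) :=
          hl0.mono_of_mem_nhdsWithin (Icc_mem_nhdsLE_of_mem ⟨by linarith, le_rfl⟩)
        have hmem2 : (n : ℝ) ∈ Set.Icc (((n + 1 : ℕ) : ℝ) - 1) ((n + 1 : ℕ) : ℝ) := by
          constructor <;> [push_cast; push_cast] <;> linarith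
        have hr0 : HasDerivWithinAt R (f (n : ℝ) (G (n + 1) (n : ℝ)))
            (Set.Icc (((n + 1 : ℕ) : ℝ) - 1) ((n + 1 : ℕ) : ℝ)) (n : ℝ) :=
          (hGd (n + 1) (n : ℝ) hmem2).congr (fun s hs => hRG (n + 1) s hs)
            (hRG (n + 1) (n : ℝ) hmem2)
        have hr0' : HasDerivWithinAt R (f (n : ℝ) (G n (n : ℝ)))
            (Set.Icc (((n + 1 : ℕ) : ℝ) - 1) ((n + 1 : ℕ) : ℝ)) (n : ℝ) := by
          rwa [hGsucc n] at hr0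
        have hrI : HasDerivWithinAt R (f (n : ℝ) (G n (n : ℝ))) (Set.Ici (n : ℝ)) (n : ℝ) := by
          apply hr0'.mono_of_mem_nhdsWithin
          apply Icc_mem_nhdsGE_of_mem
          constructor <;> [push_cast; push_cast] <;> linarith
        have huniv := hlI.union hrI
        rw [Set.Iic_union_Ici, hasDerivWithinAt_univ] at huniv
        have hRn : R (n : ℝ) = G n (n : ℝ) := hRG n (n : ℝ) hmem1
        rw [heq] at huniv hRn
        rwa [← hRn] at huniv
      · exact haux (⌊t⌋₊ + 1) t (by push_cast; linarith)
          (by push_cast; exact_mod_cast Nat.lt_floor_add_one t)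
  have hmem00 : (-1 : ℝ) ∈ Set.Icc (((0:ℕ):ℝ) - 1) ((0:ℕ):ℝ) := by norm_num
  have hR1 : R (-1) = 1 := by rw [hRG 0 (-1) hmem00]; exact hG0
  have hRcont : ContinuousOn R (Set.Ici (-1 : ℝ)) := by
    intro t ht
    rcases eq_or_lt_of_le (Set.mem_Ici.1 ht) with heq | hlt
    · have h0 : HasDerivWithinAt R (f (-1) (G 0 (-1)))
          (Set.Icc (((0:ℕ):ℝ) - 1) ((0:ℕ):ℝ)) (-1) := by
        have e2 : ((0 : ℕ) : ℝ) - 1 = -1 := by norm_num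
        exact (hGd 0 (-1) hmem00).congr (fun s hs => hRG 0 s hs) (hRG 0 (-1) hmem00)
      have h1 := h0.continuousWithinAt
      rw [← heq]
      apply h1.mono_of_mem_nhdsWithin
      apply Icc_mem_nhdsGE_of_mem
      norm_num
    · exact (hRd t hlt).continuousAt.continuousWithinAt
  -- upper invariance
  have hRB : ∀ t, -1 ≤ t → R t ≤ B := by
    by_contra hcon
    push_neg at hcon
    obtain ⟨t₂, ht₂, hB2⟩ := hcon
    have ht₂' : -1 < t₂ := by
      rcases eq_or_lt_of_le ht₂ with h | h
      · exfalso; rw [← h, hR1] at hB2; linarith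
      · exact h
    set S := Set.Icc (-1 : ℝ) t₂ ∩ R ⁻¹' Set.Iic B with hSdef
    have hSclosed : IsClosed S :=
      (hRcont.mono (Set.Icc_subset_Ici_self)).preimage_isClosed_of_isClosed
        isClosed_Icc isClosed_Iic
    have hScompact : IsCompact S :=
      isCompact_Icc.of_isClosed_subset hSclosed Set.inter_subset_left
    have hSne : S.Nonempty :=
      ⟨-1, ⟨le_rfl, ht₂⟩, by rw [Set.mem_preimage, hR1]; exact Set.mem_Iic.2 hB1⟩
    set t₁ := sSup S with ht₁def
    have ht₁S : t₁ ∈ S := hScompact.sSup_mem hSne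
    have ht₁mem : t₁ ∈ Set.Icc (-1 : ℝ) t₂ := ht₁S.1
    have hRt₁ : R t₁ ≤ B := ht₁S.2
    have ht₁lt : t₁ < t₂ := by
      rcases eq_or_lt_of_le ht₁mem.2 with h | h
      · exfalso; rw [h] at hRt₁; linarith
      · exact h
    have hgt : ∀ s ∈ Set.Ioc t₁ t₂, B < R s := by
      intro s hs
      by_contra hle
      push_neg at hle
      have hsS : s ∈ S := ⟨⟨le_trans ht₁mem.1 hs.1.le, hs.2⟩, Set.mem_Iic.2 hle⟩
      have := le_csSup hScompact.bddAbove hsS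
      exact absurd this (not_le.2 hs.1)
    have hanti : R t₂ ≤ R t₁ := by
      apply anti_Icc (f := R) (f' := fun s => f s (R s))
        (hRcont.mono ((Set.Icc_subset_Ici_self).trans (Set.Ici_subset_Ici.2 ht₁mem.1)))
        ?_ ?_ (Set.left_mem_Icc.2 ht₁lt.le) (Set.right_mem_Icc.2 ht₁lt.le) ht₁lt.le
      · intro s hs
        exact hRd s (by linarith [ht₁mem.1, hs.1])
      · intro s hs
        have hBs : B < R s := hgt s ⟨hs.1, hs.2.le⟩
        have hcs : c (R s) = B := hc_B _ hBs.le
        show f s (R s) ≤ 0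
        simp only [hfdef]
        rw [hcs]
        have h1 : qfun B < 1 := qfun_lt_one hB0.le
        have h2 : 0 ≤ qfun B := qfun_nonneg hB0.le
        have h3 := hΦpos s
        have h4 := hMle s
        have h5 : Φ s * qfun B ≤ M := by nlinarith
        nlinarith
    linarith
  -- positivity
  have hRpos : ∀ t, -1 ≤ t → 0 < R t := by
    by_contra hcon
    push_neg at hcon
    obtain ⟨t₂, ht₂, hle2⟩ := hcon
    have ht₂' : -1 < t₂ := by
      rcases eq_or_lt_of_le ht₂ with h | h
      · exfalso; rw [← h, hR1] at hle2; linarith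
      · exact h
    set S := Set.Icc (-1 : ℝ) t₂ ∩ R ⁻¹' Set.Iic 0 with hSdef
    have hSclosed : IsClosed S :=
      (hRcont.mono (Set.Icc_subset_Ici_self)).preimage_isClosed_of_isClosed
        isClosed_Icc isClosed_Iic
    have hScompact : IsCompact S :=
      isCompact_Icc.of_isClosed_subset hSclosed Set.inter_subset_left
    have hSne : S.Nonempty := ⟨t₂, ⟨ht₂, le_rfl⟩, Set.mem_Iic.2 hle2⟩
    set t₁ := sInf S with ht₁def
    have ht₁S : t₁ ∈ S := hScompact.sInf_mem hSne
    have ht₁mem : t₁ ∈ Set.Icc (-1 : ℝ) t₂ := ht₁S.1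
    have hRt₁ : R t₁ ≤ 0 := ht₁S.2
    have ht₁gt : -1 < t₁ := by
      rcases eq_or_lt_of_le ht₁mem.1 with h | h
      · exfalso; rw [← h, hR1] at hRt₁; linarith
      · exact h
    have hpos : ∀ s ∈ Set.Ico (-1 : ℝ) t₁, 0 < R s := by
      intro s hs
      by_contra hle
      push_neg at hle
      have hsS : s ∈ S := ⟨⟨hs.1, le_trans hs.2.le ht₁mem.2⟩, Set.mem_Iic.2 hle⟩
      have := csInf_le (hScompact.bddBelow) hsS
      exact absurd this (not_le.2 hs.2)
    -- monotone auxiliary function R s * exp(μσs/3)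
    set E := fun s : ℝ => Real.exp (μ * σ / 3 * s) with hEdef
    have hmono : R (-1) * E (-1) ≤ R t₁ * E t₁ := by
      apply mono_Icc (f := fun s => R s * E s)
        (f' := fun s => f s (R s) * E s + R s * (E s * (μ * σ / 3)))
        ?_ ?_ ?_ (Set.left_mem_Icc.2 ht₁gt.le) (Set.right_mem_Icc.2 ht₁gt.le) ht₁gt.le
      · apply ContinuousOn.mul
        · exact hRcont.mono Set.Icc_subset_Ici_self
        · exact (Real.continuous_exp.comp (continuous_const.mul continuous_id)).continuousOn
      · intro s hs
        have hlin : HasDerivAt (fun y : ℝ => μ * σ / 3 * y) (μ * σ / 3) s := by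
          simpa using (hasDerivAt_id s).const_mul (μ * σ / 3)
        exact (hRd s hs.1).mul hlin.exp
      · intro s hs
        have hRs : 0 < R s := hpos s ⟨hs.1.le, hs.2⟩
        have hRsB : R s ≤ B := hRB s hs.1.le
        have hcs : c (R s) = R s := hc_id _ hRs.le hRsB
        show 0 ≤ f s (R s) * E s + R s * (E s * (μ * σ / 3))
        have hfeq : f s (R s) * E s + R s * (E s * (μ * σ / 3))
            = E s * (μ * (Φ s * qfun (R s))) := by
          simp only [hfdef]; rw [hcs]; ring
        rw [hfeq]
        exact mul_nonneg (Real.exp_pos _).le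
          (mul_nonneg hμ.le (mul_nonneg (hΦpos s).le (qfun_nonneg hRs.le)))
    rw [hR1, one_mul] at hmono
    have hE1 : 0 < E (-1) := Real.exp_pos _
    have hE2 : 0 < E t₁ := Real.exp_pos _
    nlinarith
  -- conclusion
  refine ⟨R, fun t ht => hRpos t (by linarith), fun t ht => ?_⟩
  have hd := hRd t (by linarith)
  have hpt := hRpos t (by linarith)
  have hbt := hRB t (by linarith)
  have hcs : c (R t) = R t := hc_id _ hpt.le hbt
  have hfeq : f t (R t) = μ * R t * (Φ t * P0 (R t) - σ / 3) := by
    simp only [hfdef]; rw [hcs, qfun_eq_mul_P0 hpt]; ring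
  rwa [hfeq] at hd

set_option maxHeartbeats 1000000 in
theorem converse_dir
    (T : ℝ) (hT : 0 < T) (Φ : ℝ → ℝ) (hΦc : Continuous Φ)
    (hΦpos : ∀ t, 0 < Φ t) (hΦper : ∀ t, Φ (t + T) = Φ t)
    (μ σ : ℝ) (hμ : 0 < μ) (hσ : 0 < σ)
    (H : ∀ R : ℝ → ℝ, (∀ t, 0 ≤ t → 0 < R t) →
        (∀ t, 0 ≤ t → HasDerivAt R (μ * R t * (Φ t * P0 (R t) - σ / 3)) t) →
        Filter.Tendsto R Filter.atTop (nhds 0)) :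
    σ ≥ (1 / T) * ∫ t in (0 : ℝ)..T, Φ t := by
  by_contra hcon
  push_neg at hcon
  obtain ⟨m, M, hm, hM0, hmle, hMle⟩ := phi_bounds hT hΦc hΦpos hΦper
  set Q := ∫ s in (0:ℝ)..T, Φ s with hQdef
  set Φbar := 1 / T * Q with hPhibar
  -- hcon : σ < Φbar
  have hΦbar0 : 0 < Φbar := lt_trans hσ hcon
  obtain ⟨R, hRpos, hRode⟩ := exists_solution T hT Φ hΦc hΦpos hΦper μ σ hμ hσ
  have hconv := H R hRpos hRode
  -- pick δ₀ > 0 with cosh δ₀ < Φbar / σ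
  have h1 : (1 : ℝ) < Φbar / σ := (one_lt_div hσ).2 hcon
  have hcosh0 : Real.cosh 0 < Φbar / σ := by rwa [Real.cosh_zero]
  have hev : Real.cosh ⁻¹' Set.Iio (Φbar / σ) ∈ nhds (0 : ℝ) :=
    Real.continuous_cosh.continuousAt (Iio_mem_nhds hcosh0)
  obtain ⟨δ, hδpos, hδball⟩ := Metric.mem_nhds_iff.1 hev
  set δ₀ := δ / 2 with hδ₀def
  have hδ₀pos : 0 < δ₀ := by positivity
  have hcoshδ₀ : Real.cosh δ₀ < Φbar / σ := by
    have : δ₀ ∈ Metric.ball (0:ℝ) δ := by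
      rw [Metric.mem_ball, Real.dist_eq, sub_zero, abs_of_pos hδ₀pos]
      linarith
    exact hδball this
  set c0 := 1 / (3 * Real.cosh δ₀) with hc0def
  have hcoshpos : 0 < Real.cosh δ₀ := Real.cosh_pos δ₀
  have hc0pos : 0 < c0 := by positivity
  have hc0key : σ / 3 < c0 * Φbar := by
    have h2 : Real.cosh δ₀ * σ < Φbar := (lt_div_iff₀ hσ).1 hcoshδ₀
    rw [hc0def, div_mul_eq_mul_div, lt_div_iff₀ (by positivity)]
    nlinarith
  have hP0low : ∀ x : ℝ, 0 < x → x ≤ δ₀ → c0 ≤ P0 x := by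
    intro x hx hxδ
    have h2 : Real.cosh x ≤ Real.cosh δ₀ := by
      rw [Real.cosh_le_cosh]
      rw [abs_of_pos hx, abs_of_pos hδ₀pos]
      exact hxδ
    calc c0 = 1 / (3 * Real.cosh δ₀) := rfl
      _ ≤ 1 / (3 * Real.cosh x) := by
          apply one_div_le_one_div_of_le (by positivity)
          linarith
      _ ≤ P0 x := P0_ge_inv_cosh hx
  -- eventually R t < δ₀
  have hev2 : ∀ᶠ t in Filter.atTop, |R t - 0| < δ₀ :=
    Metric.tendsto_nhds.mp hconv δ₀ hδ₀pos
  obtain ⟨t₀, ht₀⟩ := Filter.eventually_atTop.1 (hev2.and (Filter.eventually_ge_atTop 0))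
  set t₁ := max t₀ 0 with ht₁def
  have ht₁0 : 0 ≤ t₁ := le_max_right _ _
  have hsmall : ∀ t, t₁ ≤ t → R t < δ₀ ∧ 0 ≤ t := by
    intro t ht
    have := ht₀ t (le_trans (le_max_left _ _) ht)
    refine ⟨?_, this.2⟩
    have h := this.1
    rw [sub_zero] at h
    exact lt_of_le_of_lt (le_abs_self _) h
  -- the log and integral functions
  set L := fun t => Real.log (R t) with hLdef
  set G := fun t => ∫ s in (0:ℝ)..t, Φ s with hGdef
  have hGd : ∀ t : ℝ, HasDerivAt G (Φ t) t := fun t =>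
    (hΦc.integral_hasStrictDerivAt 0 t).hasDerivAt
  have hLd : ∀ t, 0 ≤ t → HasDerivAt L (μ * (Φ t * P0 (R t) - σ / 3)) t := by
    intro t ht
    have h := (hRode t ht).log (hRpos t ht).ne'
    convert h using 1
    field_simp [(hRpos t ht).ne']
  have hGb : ∀ t, 0 ≤ t → Φbar * (t - T) ≤ G t ∧ G t ≤ Φbar * t + T * M :=
    fun t ht => G_bounds hT hΦc hΦpos hΦper hMle ht
  -- monotone comparison function A
  set ε := μ * (c0 * Φbar - σ / 3) with hεdef
  have hεpos : 0 < ε := by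
    rw [hεdef]; apply mul_pos hμ; linarith
  set D := μ * c0 * (Φbar * T + Φbar * t₁ + T * M - Φbar * t₁) with hDdef
  have hmono : ∀ x, t₁ ≤ x →
      L t₁ - μ * c0 * G t₁ + μ * σ / 3 * t₁ ≤ L x - μ * c0 * G x + μ * σ / 3 * x := by
    intro x hx
    apply mono_Icc (f := fun t => L t - μ * c0 * G t + μ * σ / 3 * t)
      (f' := fun t => μ * Φ t * (P0 (R t) - c0))
      ?_ ?_ ?_ (Set.left_mem_Icc.2 hx) (Set.right_mem_Icc.2 hx) hx
    · intro s hs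
      have hs0 : 0 ≤ s := le_trans ht₁0 hs.1
      exact (((hLd s hs0).sub ((hGd s).const_mul (μ * c0))).add
        ((hasDerivAt_id s).const_mul (μ * σ / 3))).continuousAt.continuousWithinAt
    · intro s hs
      have hs0 : 0 ≤ s := le_trans ht₁0 hs.1.le
      have h := ((hLd s hs0).sub ((hGd s).const_mul (μ * c0))).add
        ((hasDerivAt_id s).const_mul (μ * σ / 3))
      exact h.congr_deriv (by ring)
    · intro s hs
      show 0 ≤ μ * Φ s * (P0 (R s) - c0)
      have hsm := hsmall s hs.1.le
      have hRs := hRpos s hsm.2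
      have hle := hP0low (R s) hRs (hsm.1).le
      have := mul_pos hμ (hΦpos s)
      nlinarith
  -- lower linear growth of L contradicts R → 0
  have hLlow : ∀ x, t₁ ≤ x → L t₁ + ε * (x - t₁) - D ≤ L x := by
    intro x hx
    have h := hmono x hx
    have hg1 := (hGb x (le_trans ht₁0 hx)).1
    have hg2 := (hGb t₁ ht₁0).2
    have hc1 : μ * c0 * (Φbar * (x - T)) ≤ μ * c0 * G x :=
      mul_le_mul_of_nonneg_left hg1 (by positivity)
    have hc2 : μ * c0 * G t₁ ≤ μ * c0 * (Φbar * t₁ + T * M) :=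
      mul_le_mul_of_nonneg_left hg2 (by positivity)
    rw [hεdef, hDdef]
    nlinarith [h, hc1, hc2]
  -- choose x large enough
  set v := (Real.log δ₀ - L t₁ + D) / ε with hvdef
  set x := t₁ + max 0 v + 1 with hxdef
  have hx1 : t₁ ≤ x := by
    have := le_max_left 0 v
    rw [hxdef]; linarith
  have hεx : Real.log δ₀ - L t₁ + D < ε * (x - t₁) := by
    have hxx : x - t₁ = max 0 v + 1 := by rw [hxdef]; ring
    rw [hxx]
    rcases le_or_gt v 0 with hv | hv
    · have : Real.log δ₀ - L t₁ + D ≤ 0 := by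
        rw [hvdef] at hv
        have := (div_nonpos_iff.1 hv)
        rcases this with ⟨h1, _⟩ | ⟨h1, h2⟩
        · linarith
        · linarith
      have hmax : max 0 v = 0 := max_eq_left hv
      rw [hmax]
      nlinarith
    · have hmax : max 0 v = v := max_eq_right hv.le
      rw [hmax, hvdef]
      have : ε * ((Real.log δ₀ - L t₁ + D) / ε + 1) = Real.log δ₀ - L t₁ + D + ε := by
        field_simp
      rw [this]
      linarith
  have hfinal1 := hLlow x hx1
  have hfinal2 : L x < Real.log δ₀ := by
    rw [hLdef]
    exact Real.log_lt_log (hRpos x (le_trans ht₁0 hx1)) (hsmall x hx1).1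
  linarith

theorem zero_solution_globally_stable_iff
    (T : ℝ) (hT : 0 < T) (Φ : ℝ → ℝ) (hΦc : Continuous Φ)
    (hΦpos : ∀ t, 0 < Φ t) (hΦper : ∀ t, Φ (t + T) = Φ t)
    (μ σ : ℝ) (hμ : 0 < μ) (hσ : 0 < σ) :
    (σ ≥ (1 / T) * ∫ t in (0 : ℝ)..T, Φ t →
      ∀ R : ℝ → ℝ, (∀ t, 0 ≤ t → 0 < R t) →
        (∀ t, 0 ≤ t → HasDerivAt R (μ * R t * (Φ t * P0 (R t) - σ / 3)) t) →
        Filter.Tendsto R Filter.atTop (nhds 0)) ∧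
    ((∀ R : ℝ → ℝ, (∀ t, 0 ≤ t → 0 < R t) →
        (∀ t, 0 ≤ t → HasDerivAt R (μ * R t * (Φ t * P0 (R t) - σ / 3)) t) →
        Filter.Tendsto R Filter.atTop (nhds 0)) →
      σ ≥ (1 / T) * ∫ t in (0 : ℝ)..T, Φ t) := by
  constructor
  · intro hge R h1 h2
    exact forward_dir T hT Φ hΦc hΦpos hΦper μ σ hμ hσ hge R h1 h2
  · intro H
    exact converse_dir T hT Φ hΦc hΦpos hΦper μ σ hμ hσ H
end

section
/- Let Φ be continuous, positive, T-periodic with mean Φ̄ and 0 < σ̃ < Φ̄. Suppose R* is a positive T-periodic solution of R' = μR(Φ(t)P₀(R) − σ̃/3) with μ > 0. Then for any positive solution R of the same ODE, there exist δ > 0 and C > 0 such that |R(t) − R*(t)| ≤ C e^{−δt} for all t > 0. -/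
open Real

/-- Generic helper: f 0 = 0 and f' ≥ 0 on [0,∞) implies f ≥ 0 there. -/
lemma nonneg_of_hasDerivAt' (f f' : ℝ → ℝ)
    (hd : ∀ x, HasDerivAt f (f' x) x) (h0 : f 0 = 0)
    (hf' : ∀ x, 0 ≤ x → 0 ≤ f' x) : ∀ x, 0 ≤ x → 0 ≤ f x := by
  intro x hx
  have hmono : MonotoneOn f (Set.Ici 0) := by
    apply monotoneOn_of_deriv_nonneg (convex_Ici 0)
    · exact fun t _ => (hd t).continuousAt.continuousWithinAt
    · intro t ht
      exact ((hd t).differentiableAt).differentiableWithinAt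
    · intro t ht
      rw [interior_Ici] at ht
      rw [(hd t).deriv]
      exact hf' t (le_of_lt ht)
  have := hmono (Set.self_mem_Ici) (Set.mem_Ici.2 hx) hx
  linarith [h0 ▸ this]

lemma f4_nonneg' : ∀ u, 0 ≤ u → 0 ≤ u * Real.cosh u - Real.sinh u - u^3/3 := by
  apply nonneg_of_hasDerivAt' _ (fun u => u * Real.sinh u - u^2)
  · intro u
    have h1 := (((hasDerivAt_id u).mul (Real.hasDerivAt_cosh u)).sub
      (Real.hasDerivAt_sinh u)).sub ((hasDerivAt_pow 3 u).div_const 3)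
    refine h1.congr_deriv ?_
    push_cast
    simp only [id_eq]
    ring
  · simp
  · intro u hu
    rcases eq_or_lt_of_le hu with h | h
    · simp [← h]
    · have : u < Real.sinh u := Real.self_lt_sinh_iff.2 h
      nlinarith

lemma f3_nonneg' : ∀ u, 0 ≤ u → 0 ≤ u * Real.sinh u - 2 * Real.cosh u + 2 - u^4/12 := by
  apply nonneg_of_hasDerivAt' _ (fun u => u * Real.cosh u - Real.sinh u - u^3/3)
  · intro u
    have h1 := ((((hasDerivAt_id u).mul (Real.hasDerivAt_sinh u)).sub
      ((Real.hasDerivAt_cosh u).const_mul 2)).add_const 2).sub ((hasDerivAt_pow 4 u).div_const 12)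
    refine h1.congr_deriv ?_
    push_cast
    simp only [id_eq]
    ring
  · simp
  · exact f4_nonneg'

lemma f2_nonneg' : ∀ u, 0 ≤ u → 0 ≤ u * Real.cosh u - 3 * Real.sinh u + 2*u - u^5/60 := by
  apply nonneg_of_hasDerivAt' _ (fun u => u * Real.sinh u - 2 * Real.cosh u + 2 - u^4/12)
  · intro u
    have h1 := ((((hasDerivAt_id u).mul (Real.hasDerivAt_cosh u)).sub
      ((Real.hasDerivAt_sinh u).const_mul 3)).add ((hasDerivAt_id u).const_mul 2)).sub
      ((hasDerivAt_pow 5 u).div_const 60)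
    refine h1.congr_deriv ?_
    push_cast
    simp only [id_eq]
    ring
  · simp
  · exact f3_nonneg'

lemma f1_nonneg' : ∀ u, 0 ≤ u → 0 ≤ u * Real.sinh u + u^2 - 4 * Real.cosh u + 4 - u^6/360 := by
  apply nonneg_of_hasDerivAt' _ (fun u => u * Real.cosh u - 3 * Real.sinh u + 2*u - u^5/60)
  · intro u
    have h1 := (((((hasDerivAt_id u).mul (Real.hasDerivAt_sinh u)).add
      (hasDerivAt_pow 2 u)).sub ((Real.hasDerivAt_cosh u).const_mul 4)).add_const 4).sub
      ((hasDerivAt_pow 6 u).div_const 360)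
    refine h1.congr_deriv ?_
    push_cast
    simp only [id_eq]
    ring
  · simp
  · exact f2_nonneg'

lemma P0_hasDerivAt (x : ℝ) (hx : 0 < x) :
    HasDerivAt P0 ((2 - x * (Real.cosh x / Real.sinh x) - x^2/(Real.sinh x)^2) / x^3) x := by
  have hs : Real.sinh x ≠ 0 := ne_of_gt (by simpa using Real.sinh_lt_sinh.2 hx)
  have hx0 : x ≠ 0 := ne_of_gt hx
  have hcoth := (Real.hasDerivAt_cosh x).div (Real.hasDerivAt_sinh x) hs
  have hN := (((hasDerivAt_id x).mul hcoth).sub_const 1)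
  have h1 := hN.div (hasDerivAt_pow 2 x) (by positivity)
  refine h1.congr_deriv ?_
  rw [show Real.cosh x * Real.cosh x = Real.sinh x ^ 2 + 1 by
    have := Real.cosh_sq x; nlinarith]
  push_cast
  simp only [id_eq, Pi.mul_apply, Pi.div_apply]
  field_simp
  ring

lemma P0_deriv_bound (x : ℝ) (hx : 0 < x) :
    (2 - x * (Real.cosh x / Real.sinh x) - x^2/(Real.sinh x)^2) / x^3
      ≤ -(2/45 * x^3 / (Real.sinh x)^2) := by
  have hs : 0 < Real.sinh x := by simpa using Real.sinh_lt_sinh.2 hx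
  have hP : 2/45 * x^6 ≤ x * Real.sinh x * Real.cosh x + x^2 - 2 * (Real.sinh x)^2 := by
    have h := f1_nonneg' (2*x) (by linarith)
    rw [Real.sinh_two_mul, Real.cosh_two_mul] at h
    have hc := Real.cosh_sq x
    nlinarith
  have e1 : (2 - x * (Real.cosh x / Real.sinh x) - x^2/(Real.sinh x)^2) / x^3
      = (2 * (Real.sinh x)^2 - x * Real.cosh x * Real.sinh x - x^2) / (x^3 * (Real.sinh x)^2) := by
    field_simp
  have e2 : -(2/45 * x^3 / (Real.sinh x)^2)
      = (-(2/45) * x^6) / (x^3 * (Real.sinh x)^2) := by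
    field_simp
  rw [e1, e2, div_le_div_iff_of_pos_right (by positivity)]
  nlinarith

/-- P0 is antitone on (0, ∞). -/
lemma P0_antitoneOn : AntitoneOn P0 (Set.Ioi 0) := by
  apply antitoneOn_of_deriv_nonpos (convex_Ioi 0)
  · intro x hx
    exact (P0_hasDerivAt x hx).continuousAt.continuousWithinAt
  · intro x hx
    rw [interior_Ioi] at hx
    exact (P0_hasDerivAt x hx).differentiableAt.differentiableWithinAt
  · intro x hx
    rw [interior_Ioi] at hx
    rw [(P0_hasDerivAt x hx).deriv]
    have h := P0_deriv_bound x hx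
    have hs : 0 < Real.sinh x := by simpa using Real.sinh_lt_sinh.2 hx
    have : 0 ≤ 2/45 * x^3 / (Real.sinh x)^2 :=
      div_nonneg (by nlinarith [pow_pos (Set.mem_Ioi.1 hx) 3]) (sq_nonneg _)
    linarith

/-- Quantitative antitonicity on a compact interval. -/
lemma P0_quant (m M : ℝ) (hm : 0 < m) (hmM : m ≤ M) :
    ∀ a b, a ∈ Set.Icc m M → b ∈ Set.Icc m M → a ≤ b →
      P0 b - P0 a ≤ -(2/45 * m^3 / (Real.sinh M)^2 * (b - a)) := by
  set c : ℝ := 2/45 * m^3 / (Real.sinh M)^2 with hc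
  have hsM : 0 < Real.sinh M := by
    simpa using Real.sinh_lt_sinh.2 (lt_of_lt_of_le hm hmM)
  have hcpos : 0 < c := by positivity
  have hQ : AntitoneOn (fun x => P0 x + c * x) (Set.Icc m M) := by
    apply antitoneOn_of_deriv_nonpos (convex_Icc m M)
    · intro x hx
      have hx0 : 0 < x := lt_of_lt_of_le hm hx.1
      have hlin : HasDerivAt (fun x : ℝ => c * x) c x := by
        simpa using (hasDerivAt_id x).const_mul c
      exact (((P0_hasDerivAt x hx0).add hlin).continuousAt).continuousWithinAt
    · intro x hx
      rw [interior_Icc] at hx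
      have hx0 : 0 < x := lt_of_lt_of_le hm (le_of_lt hx.1)
      have hlin : HasDerivAt (fun x : ℝ => c * x) c x := by
        simpa using (hasDerivAt_id x).const_mul c
      exact (((P0_hasDerivAt x hx0).add hlin).differentiableAt).differentiableWithinAt
    · intro x hx
      rw [interior_Icc] at hx
      have hx0 : 0 < x := lt_of_lt_of_le hm (le_of_lt hx.1)
      have hlin : HasDerivAt (fun x : ℝ => c * x) c x := by
        simpa using (hasDerivAt_id x).const_mul c
      have hd := (P0_hasDerivAt x hx0).add hlin
      rw [show deriv (fun x => P0 x + c * x) x = _ from hd.deriv]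
      have h1 := P0_deriv_bound x hx0
      have hsx : 0 < Real.sinh x := by simpa using Real.sinh_lt_sinh.2 hx0
      have h2 : c ≤ 2/45 * x^3 / (Real.sinh x)^2 := by
        rw [hc]
        apply div_le_div₀ (by positivity) _ (by positivity)
        · exact pow_le_pow_left₀ hsx.le (Real.sinh_le_sinh.2 hx.2.le) 2
        · nlinarith [pow_le_pow_left₀ hm.le (le_of_lt hx.1) 3]
      linarith
  intro a b ha hb hab
  have := hQ ha hb hab
  simp only at this
  nlinarith

/-- exp inequality: e^{-K} y² ≤ y (e^y - 1) when |y| ≤ K. -/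
lemma exp_key1 (y K : ℝ) (hK : |y| ≤ K) :
    Real.exp (-K) * y^2 ≤ y * (Real.exp y - 1) := by
  rcases le_or_gt 0 y with hy | hy
  · have h1 : y + 1 ≤ Real.exp y := Real.add_one_le_exp y
    have h2 : Real.exp (-K) ≤ 1 := by
      rw [Real.exp_le_one_iff]
      have := abs_nonneg y
      linarith
    nlinarith
  · have hyK : -K ≤ y := by
      have := abs_le.1 hK
      linarith [this.1]
    have h1 : Real.exp (-K) ≤ Real.exp y := Real.exp_le_exp.2 hyK
    have h2 : (-y) + 1 ≤ Real.exp (-y) := Real.add_one_le_exp (-y)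
    have h3 : Real.exp (-y) * Real.exp y = 1 := by
      rw [← Real.exp_add]; simp
    have hey : 0 < Real.exp y := Real.exp_pos y
    -- 1 - e^y ≥ -y e^y
    have h4 : -y * Real.exp y ≤ 1 - Real.exp y := by nlinarith
    nlinarith

/-- exp inequality: |e^y - 1| ≤ e^K |y| when |y| ≤ K. -/
lemma exp_key2 (y K : ℝ) (hK : |y| ≤ K) :
    |Real.exp y - 1| ≤ Real.exp K * |y| := by
  have hK0 : 0 ≤ K := le_trans (abs_nonneg y) hK
  have heK : 1 ≤ Real.exp K := Real.one_le_exp hK0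
  rcases le_or_gt 0 y with hy | hy
  · have h2 : (-y) + 1 ≤ Real.exp (-y) := Real.add_one_le_exp (-y)
    have h3 : Real.exp (-y) * Real.exp y = 1 := by rw [← Real.exp_add]; simp
    have hey : 0 < Real.exp y := Real.exp_pos y
    have h4 : Real.exp y - 1 ≤ y * Real.exp y := by nlinarith
    have h5 : Real.exp y ≤ Real.exp K := Real.exp_le_exp.2 (le_trans (le_abs_self y) hK)
    have h6 : 0 ≤ Real.exp y - 1 := by
      have := Real.add_one_le_exp y; linarith
    rw [abs_of_nonneg h6, abs_of_nonneg hy]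
    nlinarith
  · have h1 : y + 1 ≤ Real.exp y := Real.add_one_le_exp y
    have hey : 0 < Real.exp y := Real.exp_pos y
    have h6 : Real.exp y ≤ 1 := Real.exp_le_one_iff.2 hy.le
    rw [abs_of_nonpos (by linarith), abs_of_neg hy]
    nlinarith

set_option maxHeartbeats 1600000 in
theorem exponential_convergence_to_periodic
    (T : ℝ) (hT : 0 < T) (Φ : ℝ → ℝ) (hΦc : Continuous Φ)
    (hΦpos : ∀ t, 0 < Φ t) (hΦper : ∀ t, Φ (t + T) = Φ t)
    (μ σ : ℝ) (hμ : 0 < μ) (hσ : 0 < σ)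
    (hσlt : σ < (1 / T) * ∫ t in (0 : ℝ)..T, Φ t)
    (Rs : ℝ → ℝ) (hRspos : ∀ t, 0 ≤ t → 0 < Rs t)
    (hRsODE : ∀ t, 0 ≤ t → HasDerivAt Rs (μ * Rs t * (Φ t * P0 (Rs t) - σ / 3)) t)
    (hRsper : ∀ t, 0 ≤ t → Rs (t + T) = Rs t)
    (R : ℝ → ℝ) (hRpos : ∀ t, 0 ≤ t → 0 < R t)
    (hODE : ∀ t, 0 ≤ t → HasDerivAt R (μ * R t * (Φ t * P0 (R t) - σ / 3)) t) :
    ∃ δ > 0, ∃ C > 0, ∀ t > 0, |R t - Rs t| ≤ C * Real.exp (-δ * t) := by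
  -- the logarithmic difference
  set y : ℝ → ℝ := fun t => Real.log (R t) - Real.log (Rs t) with hy_def
  -- derivative of y
  have hy : ∀ t, 0 ≤ t → HasDerivAt y (μ * Φ t * (P0 (R t) - P0 (Rs t))) t := by
    intro t ht
    have h1 := (hODE t ht).log (hRpos t ht).ne'
    have h2 := (hRsODE t ht).log (hRspos t ht).ne'
    have h3 := h1.sub h2
    refine h3.congr_deriv ?_
    field_simp [(hRpos t ht).ne', (hRspos t ht).ne']
    ring
  -- R t = Rs t * exp (y t)
  have hRexp : ∀ t, 0 ≤ t → R t = Rs t * Real.exp (y t) := by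
    intro t ht
    rw [hy_def]
    simp only
    rw [Real.exp_sub, Real.exp_log (hRpos t ht), Real.exp_log (hRspos t ht)]
    rw [eq_comm, mul_comm, div_mul_cancel₀ _ (hRspos t ht).ne']
  -- V = y² is antitone on [0, ∞)
  have hsign : ∀ t, 0 ≤ t → y t * (P0 (R t) - P0 (Rs t)) ≤ 0 := by
    intro t ht
    rcases le_total (R t) (Rs t) with h | h
    · have hy0 : y t ≤ 0 := by
        simp only [hy_def, sub_nonpos]
        exact Real.log_le_log (hRpos t ht) h
      have hP : P0 (Rs t) ≤ P0 (R t) :=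
        P0_antitoneOn (Set.mem_Ioi.2 (hRpos t ht)) (Set.mem_Ioi.2 (hRspos t ht)) h
      exact mul_nonpos_of_nonpos_of_nonneg hy0 (by linarith)
    · have hy0 : 0 ≤ y t := by
        simp only [hy_def, sub_nonneg]
        exact Real.log_le_log (hRspos t ht) h
      have hP : P0 (R t) ≤ P0 (Rs t) :=
        P0_antitoneOn (Set.mem_Ioi.2 (hRspos t ht)) (Set.mem_Ioi.2 (hRpos t ht)) h
      exact mul_nonpos_of_nonneg_of_nonpos hy0 (by linarith)
  have hVd : ∀ t, 0 ≤ t → HasDerivAt (fun t => (y t)^2)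
      (2 * y t * (μ * Φ t * (P0 (R t) - P0 (Rs t)))) t := by
    intro t ht
    have := (hy t ht).pow 2
    refine this.congr_deriv ?_
    push_cast
    ring
  have hVanti : AntitoneOn (fun t => (y t)^2) (Set.Ici 0) := by
    apply antitoneOn_of_deriv_nonpos (convex_Ici 0)
    · exact fun t ht => (hVd t ht).continuousAt.continuousWithinAt
    · intro t ht
      rw [interior_Ici] at ht
      exact (hVd t (le_of_lt ht)).differentiableAt.differentiableWithinAt
    · intro t ht
      rw [interior_Ici] at ht
      rw [(hVd t (le_of_lt ht)).deriv]
      have h1 := hsign t (le_of_lt ht)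
      have h2 := (hΦpos t).le
      have h3 : (μ * Φ t) * (y t * (P0 (R t) - P0 (Rs t))) ≤ 0 :=
        mul_nonpos_of_nonneg_of_nonpos (by positivity) h1
      nlinarith
  set K : ℝ := |y 0| with hK_def
  have hK0 : 0 ≤ K := abs_nonneg _
  have hyK : ∀ t, 0 ≤ t → |y t| ≤ K := by
    intro t ht
    have := hVanti Set.self_mem_Ici (Set.mem_Ici.2 ht) ht
    simp only at this
    rw [hK_def, ← Real.sqrt_sq_eq_abs, ← Real.sqrt_sq_eq_abs]
    exact Real.sqrt_le_sqrt this
  -- bounds on Rs via periodicity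
  have hRscont : ContinuousOn Rs (Set.Icc 0 T) := fun s hs =>
    ((hRsODE s hs.1).differentiableAt.continuousAt).continuousWithinAt
  have hred : ∀ n : ℕ, ∀ t : ℝ, 0 ≤ t → t ≤ (n+1) * T → ∃ s ∈ Set.Icc 0 T, Rs t = Rs s := by
    intro n
    induction n with
    | zero =>
      intro t ht hle
      exact ⟨t, ⟨ht, by simpa using hle⟩, rfl⟩
    | succ n ih =>
      intro t ht hle
      rcases le_or_gt t T with h | h
      · exact ⟨t, ⟨ht, h⟩, rfl⟩
      · obtain ⟨s, hs, he⟩ := ih (t - T) (by linarith) (by push_cast at hle ⊢; linarith)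
        refine ⟨s, hs, ?_⟩
        have hper := hRsper (t - T) (by linarith)
        rw [sub_add_cancel] at hper
        rw [hper, he]
  have hredt : ∀ t : ℝ, 0 ≤ t → ∃ s ∈ Set.Icc 0 T, Rs t = Rs s := by
    intro t ht
    obtain ⟨n, hn⟩ := exists_nat_ge (t / T)
    refine hred n t ht ?_
    have : t ≤ n * T := by
      rw [div_le_iff₀ hT] at hn
      linarith
    nlinarith [hT.le]
  obtain ⟨t1, ht1, hmin⟩ := isCompact_Icc.exists_isMinOn (Set.nonempty_Icc.2 hT.le) hRscont
  obtain ⟨t2, ht2, hmax⟩ := isCompact_Icc.exists_isMaxOn (Set.nonempty_Icc.2 hT.le) hRscont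
  set m1 : ℝ := Rs t1 with hm1_def
  set M1 : ℝ := Rs t2 with hM1_def
  have hm1 : 0 < m1 := hRspos t1 ht1.1
  have hRsb : ∀ t, 0 ≤ t → m1 ≤ Rs t ∧ Rs t ≤ M1 := by
    intro t ht
    obtain ⟨s, hs, he⟩ := hredt t ht
    exact ⟨he ▸ hmin hs, he ▸ hmax hs⟩
  have hM1 : 0 < M1 := lt_of_lt_of_le hm1 (hRsb t1 ht1.1).2
  have hm1M1 : m1 ≤ M1 := le_trans (hRsb t1 ht1.1).1 (hRsb t1 ht1.1).2
  -- lower bound on Φ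
  obtain ⟨t3, ht3, hΦmin'⟩ := isCompact_Icc.exists_isMinOn (Set.nonempty_Icc.2 hT.le)
    (hΦc.continuousOn (s := Set.Icc 0 T))
  set Φm : ℝ := Φ t3 with hΦm_def
  have hΦm : 0 < Φm := hΦpos t3
  have hΦb : ∀ t, Φm ≤ Φ t := by
    intro t
    have hΦP : Function.Periodic Φ T := hΦper
    obtain ⟨s, hs, he⟩ := hΦP.exists_mem_Ico₀ hT t
    rw [he]
    exact hΦmin' (Set.Ico_subset_Icc_self hs)
  -- bounds on R and Rs
  set m : ℝ := m1 * Real.exp (-K) with hm_def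
  set M : ℝ := M1 * Real.exp K with hM_def
  have hm : 0 < m := by positivity
  have hmM : m ≤ M := by
    rw [hm_def, hM_def]
    have h1 : Real.exp (-K) ≤ Real.exp K := Real.exp_le_exp.2 (by linarith)
    nlinarith [Real.exp_pos (-K)]
  have hRb : ∀ t, 0 ≤ t → m ≤ R t ∧ R t ≤ M := by
    intro t ht
    obtain ⟨h1, h2⟩ := hRsb t ht
    have h3 := hyK t ht
    have h4 : Real.exp (-K) ≤ Real.exp (y t) := Real.exp_le_exp.2 (by cases abs_le.1 h3; linarith)
    have h5 : Real.exp (y t) ≤ Real.exp K := Real.exp_le_exp.2 (le_trans (le_abs_self _) h3)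
    rw [hRexp t ht]
    constructor
    · rw [hm_def]
      nlinarith [Real.exp_pos (-K), Real.exp_pos (y t)]
    · rw [hM_def]
      nlinarith [Real.exp_pos (y t)]
  have hRsb' : ∀ t, 0 ≤ t → m ≤ Rs t ∧ Rs t ≤ M := by
    intro t ht
    obtain ⟨h1, h2⟩ := hRsb t ht
    have he1 : Real.exp (-K) ≤ 1 := Real.exp_le_one_iff.2 (by linarith)
    have he2 : 1 ≤ Real.exp K := Real.one_le_exp hK0
    constructor
    · rw [hm_def]; nlinarith [Real.exp_pos (-K)]
    · rw [hM_def]; nlinarith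
  set c : ℝ := 2/45 * m^3 / (Real.sinh M)^2 with hc_def
  have hsM : 0 < Real.sinh M := by simpa using Real.sinh_lt_sinh.2 (lt_of_lt_of_le hm hmM)
  have hc : 0 < c := by positivity
  -- key pointwise estimate
  have hkey : ∀ t, 0 ≤ t →
      y t * (P0 (R t) - P0 (Rs t)) ≤ -(c * m1 * Real.exp (-K) * (y t)^2) := by
    intro t ht
    have hRm := hRb t ht
    have hRsm := hRsb' t ht
    have hQ := P0_quant m M hm hmM
    have hprod : m1 * Real.exp (-K) * (y t)^2 ≤ y t * (R t - Rs t) := by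
      have h1 := exp_key1 (y t) K (hyK t ht)
      have h2 := (hRsb t ht).1
      have h3 : y t * (R t - Rs t) = Rs t * (y t * (Real.exp (y t) - 1)) := by
        rw [hRexp t ht]; ring
      rw [h3]
      have h4 : 0 ≤ y t * (Real.exp (y t) - 1) := by
        have := mul_nonneg (Real.exp_pos (-K)).le (sq_nonneg (y t))
        linarith
      nlinarith
    rcases le_total (Rs t) (R t) with h | h
    · have hy0 : 0 ≤ y t := by
        simp only [hy_def, sub_nonneg]
        exact Real.log_le_log (hRspos t ht) h
      have hΔ := hQ (Rs t) (R t) ⟨hRsm.1, hRsm.2⟩ ⟨hRm.1, hRm.2⟩ h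
      nlinarith [mul_le_mul_of_nonneg_left hΔ hy0, mul_le_mul_of_nonneg_left hprod hc.le]
    · have hy0 : y t ≤ 0 := by
        simp only [hy_def, sub_nonpos]
        exact Real.log_le_log (hRpos t ht) h
      have hΔ := hQ (R t) (Rs t) ⟨hRm.1, hRm.2⟩ ⟨hRsm.1, hRsm.2⟩ h
      nlinarith [mul_le_mul_of_nonpos_left hΔ hy0, mul_le_mul_of_nonneg_left hprod hc.le]
  -- Gronwall
  set δ : ℝ := μ * Φm * c * m1 * Real.exp (-K) with hδ_def
  have hδ : 0 < δ := by positivity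
  have hWd : ∀ t, 0 ≤ t → HasDerivAt (fun t => (y t)^2 * Real.exp (2*δ*t))
      (2 * y t * (μ * Φ t * (P0 (R t) - P0 (Rs t))) * Real.exp (2*δ*t)
        + (y t)^2 * (Real.exp (2*δ*t) * (2*δ))) t := by
    intro t ht
    have hlin : HasDerivAt (fun t : ℝ => 2*δ*t) (2*δ) t := by
      simpa using (hasDerivAt_id t).const_mul (2*δ)
    exact (hVd t ht).mul hlin.exp
  have hWanti : AntitoneOn (fun t => (y t)^2 * Real.exp (2*δ*t)) (Set.Ici 0) := by
    apply antitoneOn_of_deriv_nonpos (convex_Ici 0)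
    · exact fun t ht => (hWd t ht).continuousAt.continuousWithinAt
    · intro t ht
      rw [interior_Ici] at ht
      exact (hWd t (le_of_lt ht)).differentiableAt.differentiableWithinAt
    · intro t ht
      rw [interior_Ici] at ht
      rw [(hWd t (le_of_lt ht)).deriv]
      have h1 := hkey t (le_of_lt ht)
      have h2 := hΦb t
      have h3 : 0 < Real.exp (2*δ*t) := Real.exp_pos _
      have h4 : μ * Φ t * (y t * (P0 (R t) - P0 (Rs t)))
          ≤ μ * Φ t * (-(c * m1 * Real.exp (-K) * (y t)^2)) :=
        mul_le_mul_of_nonneg_left h1 (mul_nonneg hμ.le (hΦpos t).le)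
      have h5 : μ * Φ t * (-(c * m1 * Real.exp (-K) * (y t)^2))
          ≤ μ * Φm * (-(c * m1 * Real.exp (-K) * (y t)^2)) := by
        have hnp : -(c * m1 * Real.exp (-K) * (y t)^2) ≤ 0 := neg_nonpos.2 (by positivity)
        have : μ * Φm ≤ μ * Φ t := mul_le_mul_of_nonneg_left h2 hμ.le
        nlinarith
      have h6 : 2 * y t * (μ * Φ t * (P0 (R t) - P0 (Rs t))) ≤ -(2 * δ) * (y t)^2 := by
        rw [hδ_def]
        nlinarith
      nlinarith
  -- conclusion
  refine ⟨δ, hδ, M1 * Real.exp K * K + 1, by positivity, ?_⟩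
  intro t ht
  have ht' : (0:ℝ) ≤ t := ht.le
  have hW := hWanti Set.self_mem_Ici (Set.mem_Ici.2 ht') ht'
  simp only [mul_zero, Real.exp_zero, mul_one] at hW
  have hy2 : (y t)^2 ≤ K^2 * Real.exp (-(2*δ)*t) := by
    have hKsq : (y 0)^2 = K^2 := (sq_abs (y 0)).symm
    have e : Real.exp (2*δ*t) * Real.exp (-(2*δ)*t) = 1 := by
      rw [← Real.exp_add]
      ring_nf
      exact Real.exp_zero
    calc (y t)^2 = (y t)^2 * (Real.exp (2*δ*t) * Real.exp (-(2*δ)*t)) := by rw [e]; ring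
      _ ≤ (y 0)^2 * Real.exp (-(2*δ)*t) := by
          nlinarith [mul_le_mul_of_nonneg_right hW (Real.exp_pos (-(2*δ)*t)).le]
      _ = K^2 * Real.exp (-(2*δ)*t) := by rw [hKsq]
  have hyd : |y t| ≤ K * Real.exp (-δ*t) := by
    have h1 : (y t)^2 ≤ (K * Real.exp (-δ*t))^2 := by
      have e2 : Real.exp (-δ*t) ^ 2 = Real.exp (-(2*δ)*t) := by
        rw [sq, ← Real.exp_add]
        ring_nf
      rw [mul_pow, e2]
      exact hy2
    rw [← Real.sqrt_sq_eq_abs]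
    rw [show K * Real.exp (-δ*t) = Real.sqrt ((K * Real.exp (-δ*t))^2) by
      rw [Real.sqrt_sq (by positivity)]]
    exact Real.sqrt_le_sqrt h1
  have hsplit : R t - Rs t = Rs t * (Real.exp (y t) - 1) := by
    rw [hRexp t ht']; ring
  rw [hsplit, abs_mul, abs_of_pos (hRspos t ht')]
  have h1 := exp_key2 (y t) K (hyK t ht')
  have h2 := (hRsb t ht').2
  have h3 : Rs t * |Real.exp (y t) - 1| ≤ M1 * (Real.exp K * |y t|) := by
    have := (hRspos t ht').le
    nlinarith [abs_nonneg (Real.exp (y t) - 1), abs_nonneg (y t),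
      Real.exp_pos K, mul_le_mul h1 h2 (by positivity) (by positivity)]
  calc Rs t * |Real.exp (y t) - 1| ≤ M1 * (Real.exp K * |y t|) := h3
    _ ≤ M1 * (Real.exp K * (K * Real.exp (-δ*t))) := by
        have := mul_le_mul_of_nonneg_left hyd (Real.exp_pos K).le
        nlinarith
    _ ≤ (M1 * Real.exp K * K + 1) * Real.exp (-δ*t) := by
        nlinarith [Real.exp_pos (-δ*t)]
end
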